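/- Let F : ℝ^{d₁} × ℝ^{d₂} → ℝ be convex in its first argument and concave in its second. For points z_j = (u_j, v_j) and weights λ_j > 0, let z̄ = (ū, v̄) be the λ-weighted average of the z_j. Then for any (u, v): (Σ_j λ_j)⁻¹ Σ_j λ_j [⟨∇_u F(u_j, v_j), u_j - u⟩ - ⟨∇_v F(u_j, v_j), v_j - v⟩] ≥ F(ū, v) - F(u, v̄). -/

import Mathlib

open scoped RealInnerProductSpace


lemma grad_ineq {E : Type*} [NormedAddCommGroup E] [InnerProductSpace ℝ E] [CompleteSpace E]
    {f : E → ℝ} {g x : E} (hf : ConvexOn ℝ Set.univ f) (hg : HasGradientAt f g x)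
    (y : E) : f x + ⟪g, y - x⟫ ≤ f y := by
  set φ : ℝ → ℝ := fun t => f (x + t • (y - x)) with hφdef
  have hline : HasDerivAt (fun t : ℝ => x + t • (y - x)) (y - x) (0 : ℝ) := by
    simpa using ((hasDerivAt_id (0 : ℝ)).smul_const (y - x)).const_add x
  have hφ : HasDerivAt φ ⟪g, y - x⟫ 0 := by
    have hg' : HasFDerivAt f ((InnerProductSpace.toDual ℝ E) g) (x + (0:ℝ) • (y - x)) := by
      simpa using hg.hasFDerivAt
    have := hg'.comp_hasDerivAt 0 hline
    exact (by simpa using this : HasDerivAt (f ∘ fun t : ℝ => x + t • (y - x)) ⟪g, y - x⟫ 0)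
  have hslope : Filter.Tendsto (slope φ 0) (nhdsWithin 0 (Set.Ioi 0)) (nhds ⟪g, y - x⟫) := by
    exact (hasDerivAt_iff_tendsto_slope.mp hφ).mono_left
      (nhdsWithin_mono 0 (fun t ht => ne_of_gt ht))
  have hev : ∀ᶠ t in nhdsWithin (0:ℝ) (Set.Ioi 0), slope φ 0 t ≤ f y - f x := by
    filter_upwards [Ioc_mem_nhdsGT_of_mem (by norm_num : (0:ℝ) ∈ Set.Ico 0 1)] with t ht
    have ht0 : 0 < t := ht.1
    have ht1 : t ≤ 1 := ht.2
    have hconv := hf.2 (Set.mem_univ x) (Set.mem_univ y) (by linarith : 0 ≤ 1 - t)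
      (le_of_lt ht0) (by ring)
    have hxt : x + t • (y - x) = (1 - t) • x + t • y := by
      module
    have hφt : φ t ≤ (1 - t) * f x + t * f y := by
      rw [hφdef]; simpa [hxt] using hconv
    have hφ0 : φ 0 = f x := by simp [hφdef]
    rw [slope_def_field]
    rw [hφ0]
    have : (φ t - f x) / (t - 0) ≤ f y - f x := by
      rw [sub_zero, div_le_iff₀ ht0]
      nlinarith
    simpa [div_eq_inv_mul] using this
  have := le_of_tendsto hslope hev
  linarith

/-- Convex-concave saddle functions: the weighted average of the first-order gap terms
bounds the Nikaido–Isoda-type gap of the weighted average point. -/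
theorem saddle_average_bound {d₁ d₂ : ℕ}
    (F : EuclideanSpace ℝ (Fin d₁) → EuclideanSpace ℝ (Fin d₂) → ℝ)
    (hconv : ∀ v, ConvexOn ℝ Set.univ fun u => F u v)
    (hconc : ∀ u, ConcaveOn ℝ Set.univ fun v => F u v)
    (gu : EuclideanSpace ℝ (Fin d₁) → EuclideanSpace ℝ (Fin d₂) → EuclideanSpace ℝ (Fin d₁))
    (gv : EuclideanSpace ℝ (Fin d₁) → EuclideanSpace ℝ (Fin d₂) → EuclideanSpace ℝ (Fin d₂))
    (hgu : ∀ u v, HasGradientAt (fun u' => F u' v) (gu u v) u)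
    (hgv : ∀ u v, HasGradientAt (fun v' => F u v') (gv u v) v)
    (n : ℕ) (hn : 0 < n)
    (u : ℕ → EuclideanSpace ℝ (Fin d₁)) (v : ℕ → EuclideanSpace ℝ (Fin d₂))
    (lam : ℕ → ℝ) (hlam : ∀ j, 0 < lam j) :
    ∀ (p : EuclideanSpace ℝ (Fin d₁)) (q : EuclideanSpace ℝ (Fin d₂)),
      F ((∑ j ∈ Finset.range n, lam j)⁻¹ • ∑ j ∈ Finset.range n, lam j • u j) q -
          F p ((∑ j ∈ Finset.range n, lam j)⁻¹ • ∑ j ∈ Finset.range n, lam j • v j) ≤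
        (∑ j ∈ Finset.range n, lam j)⁻¹ *
          ∑ j ∈ Finset.range n,
            lam j * (⟪gu (u j) (v j), u j - p⟫ - ⟪gv (u j) (v j), v j - q⟫) := by
  intro p q
  have hS : 0 < ∑ j ∈ Finset.range n, lam j :=
    Finset.sum_pos (fun j _ => hlam j) (Finset.nonempty_range_iff.mpr hn.ne')
  set S := ∑ j ∈ Finset.range n, lam j with hSdef
  -- Jensen for the convex part
  have hJu : F (S⁻¹ • ∑ j ∈ Finset.range n, lam j • u j) q ≤
      S⁻¹ * ∑ j ∈ Finset.range n, lam j * F (u j) q := by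
    have := (hconv q).map_centerMass_le (t := Finset.range n) (w := lam) (p := u)
      (fun j _ => (hlam j).le) hS (fun j _ => Set.mem_univ _)
    simpa [Finset.centerMass, smul_eq_mul, Finset.mul_sum, Function.comp] using this
  -- Jensen for the concave part
  have hJv : S⁻¹ * ∑ j ∈ Finset.range n, lam j * F p (v j) ≤
      F p (S⁻¹ • ∑ j ∈ Finset.range n, lam j • v j) := by
    have := (hconc p).le_map_centerMass (t := Finset.range n) (w := lam) (p := v)
      (fun j _ => (hlam j).le) hS (fun j _ => Set.mem_univ _)
    simpa [Finset.centerMass, smul_eq_mul, Finset.mul_sum, Function.comp] using this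
  -- termwise bound
  have hterm : ∀ j, F (u j) q - F p (v j) ≤
      ⟪gu (u j) (v j), u j - p⟫ - ⟪gv (u j) (v j), v j - q⟫ := by
    intro j
    have h1 := grad_ineq (hconv (v j)) (hgu (u j) (v j)) p
    have hnegconv : ConvexOn ℝ Set.univ (fun v' => -F (u j) v') := (hconc (u j)).neg
    have hneg : HasGradientAt (fun v' => -F (u j) v') (-(gv (u j) (v j))) (v j) := by
      rw [hasGradientAt_iff_hasFDerivAt]
      rw [map_neg]; exact (hgv (u j) (v j)).hasFDerivAt.neg
    have h2 := grad_ineq hnegconv hneg q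
    have e1 : ⟪gu (u j) (v j), p - u j⟫ = -⟪gu (u j) (v j), u j - p⟫ := by
      rw [← neg_sub, inner_neg_right]
    have e2 : ⟪-gv (u j) (v j), q - v j⟫ = ⟪gv (u j) (v j), v j - q⟫ := by
      rw [inner_neg_left, ← neg_sub, inner_neg_right, neg_neg]
    rw [e1] at h1
    rw [e2] at h2
    linarith
  have hsum : ∑ j ∈ Finset.range n, lam j * (F (u j) q - F p (v j)) ≤
      ∑ j ∈ Finset.range n,
        lam j * (⟪gu (u j) (v j), u j - p⟫ - ⟪gv (u j) (v j), v j - q⟫) :=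
    Finset.sum_le_sum fun j _ => mul_le_mul_of_nonneg_left (hterm j) (hlam j).le
  have hdist : S⁻¹ * ∑ j ∈ Finset.range n, lam j * (F (u j) q - F p (v j)) =
      S⁻¹ * ∑ j ∈ Finset.range n, lam j * F (u j) q -
        S⁻¹ * ∑ j ∈ Finset.range n, lam j * F p (v j) := by
    rw [← mul_sub, ← Finset.sum_sub_distrib]
    simp [mul_sub]
  have hfinal := mul_le_mul_of_nonneg_left hsum (inv_nonneg.mpr hS.le)
  linarith
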